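/- Let a, b be positive integers and h ≥ 1. Suppose r, s are positive integers with r > s, and set k = r² − s², l = 2rs. If (a^h k)² + (b^h l)² is a perfect square, then x₂ = b^{2h} l² / k² is the square of a rational number and the point (x₂, y) lies on the curve y² = x³ + (a^{2h}+b^{2h})x² + a^{2h}b^{2h}x for some rational y. -/

import Mathlib

theorem stmt_6 (a b r s : ℤ) (h : ℕ) (ha : 0 < a) (hb : 0 < b) (hh : 1 ≤ h)
    (hs : 0 < s) (hrs : s < r)
    (k l : ℤ) (hk : k = r ^ 2 - s ^ 2) (hl : l = 2 * r * s)
    (hpyth : IsSquare ((a ^ h * k) ^ 2 + (b ^ h * l) ^ 2)) :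
    (∃ t : ℚ, ((b : ℚ) ^ (2 * h) * (l : ℚ) ^ 2 / (k : ℚ) ^ 2) = t ^ 2) ∧
    (∃ y : ℚ,
      y ^ 2 = ((b : ℚ) ^ (2 * h) * (l : ℚ) ^ 2 / (k : ℚ) ^ 2) ^ 3 +
        ((a : ℚ) ^ (2 * h) + (b : ℚ) ^ (2 * h)) *
          ((b : ℚ) ^ (2 * h) * (l : ℚ) ^ 2 / (k : ℚ) ^ 2) ^ 2 +
        (a : ℚ) ^ (2 * h) * (b : ℚ) ^ (2 * h) *
          ((b : ℚ) ^ (2 * h) * (l : ℚ) ^ 2 / (k : ℚ) ^ 2)) := by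
  obtain ⟨c, hc⟩ := hpyth
  have hk0 : (k : ℚ) ≠ 0 := by
    have : 0 < k := by nlinarith
    exact_mod_cast this.ne'
  have hb2 : (b : ℚ) ^ (2 * h) = ((b : ℚ) ^ h) ^ 2 := by
    rw [mul_comm, pow_mul]
  have ha2 : (a : ℚ) ^ (2 * h) = ((a : ℚ) ^ h) ^ 2 := by
    rw [mul_comm, pow_mul]
  have key : ((c : ℚ)) ^ 2 =
      ((a : ℚ) ^ h) ^ 2 * (k : ℚ) ^ 2 + ((b : ℚ) ^ h) ^ 2 * (l : ℚ) ^ 2 := by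
    have := congrArg (fun z : ℤ => (z : ℚ)) hc
    push_cast at this
    linear_combination -this
  constructor
  · exact ⟨(b : ℚ) ^ h * l / k, by rw [hb2]; field_simp⟩
  · refine ⟨(b : ℚ) ^ (2 * h) * l * c * ((r : ℚ) ^ 2 + (s : ℚ) ^ 2) / (k : ℚ) ^ 3, ?_⟩
    have hkl : (k : ℚ) ^ 2 + (l : ℚ) ^ 2 = ((r : ℚ) ^ 2 + (s : ℚ) ^ 2) ^ 2 := by
      subst hk hl; push_cast; ring
    rw [ha2, hb2]
    field_simp
    linear_combination (l:ℚ)^2 *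
      (((r:ℚ)^2+(s:ℚ)^2)^2 * key -
       (((a:ℚ)^h)^2*(k:ℚ)^2 + ((b:ℚ)^h)^2*(l:ℚ)^2) * hkl)
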